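/- In the simulation of Theorem 1, every sentential form reachable in Π₁ contains at most one occurrence of a symbol from the marker set {P^j_i : 1 ≤ i ≤ n, 1 ≤ j ≤ 3} in the skin membrane, namely none: any string present in the skin membrane during a correct computation of Π₁ contains no marker symbols. -/

import Mathlib

inductive Tar where
  | here | inn | out
deriving DecidableEq

/-- A rule of an insertion-deletion P system: contexts, the inserted/deleted
string, a flag (`true` = insertion, `false` = deletion) and a target. -/
structure PRule (V : Type) where
  lctx : List V
  rctx : List V
  str  : List V
  isIns : Bool
  tar : Tar

/-- Insertion rule `(u, α, v; tar)_a`. -/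
def iRule {V : Type} (u α v : List V) (t : Tar) : PRule V := ⟨u, v, α, true, t⟩

/-- Deletion rule `(u, α, v; tar)_e`. -/
def dRule {V : Type} (u α v : List V) (t : Tar) : PRule V := ⟨u, v, α, false, t⟩

/-- `r.applies x y` : applying rule `r` to the string `x` can produce `y`. -/
def PRule.applies {V : Type} (r : PRule V) (x y : List V) : Prop :=
  if r.isIns then
    ∃ x₁ x₂, x = x₁ ++ r.lctx ++ r.rctx ++ x₂ ∧
             y = x₁ ++ r.lctx ++ r.str ++ r.rctx ++ x₂
  else
    ∃ x₁ x₂, x = x₁ ++ r.lctx ++ r.str ++ r.rctx ++ x₂ ∧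
             y = x₁ ++ r.lctx ++ r.rctx ++ x₂

/-- Size condition `(n,m,m';p,q,q')` on a rule. -/
def PRule.sizeOk {V : Type} (n m m' p q q' : ℕ) (r : PRule V) : Prop :=
  if r.isIns then r.str.length ≤ n ∧ r.lctx.length ≤ m ∧ r.rctx.length ≤ m'
  else r.str.length ≤ p ∧ r.lctx.length ≤ q ∧ r.rctx.length ≤ q'

/-- An insertion-deletion P system with `k` linearly nested membranes
(region `0` is the skin membrane, region `i+1` is immediately inside region `i`),
terminal alphabet `T ⊆ V`, initial languages `M i` and rule sets `R i`. -/
structure PSys (V : Type) (k : ℕ) where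
  T : Set V
  M : Fin k → Set (List V)
  R : Fin k → Set (PRule V)

/-- The region where a string produced in region `i` with target `t` is placed;
`none` means the string leaves the system (target `out` in the skin membrane). -/
def tarRegion {k : ℕ} (i : Fin k) : Tar → Option (Fin k)
  | Tar.here => some i
  | Tar.inn => if h : i.val + 1 < k then some ⟨i.val + 1, h⟩ else none
  | Tar.out =>
      if 0 < i.val then some ⟨i.val - 1, Nat.lt_of_le_of_lt (Nat.sub_le _ _) i.isLt⟩
      else none

/-- `InReg Sys i w` : during some computation of `Sys`, the string `w` appears in
region `i` (strings persist in arbitrarily many copies, so reachability is the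
appropriate semantics). -/
inductive InReg {V : Type} {k : ℕ} (Sys : PSys V k) : Fin k → List V → Prop where
  | init {i : Fin k} {w : List V} : w ∈ Sys.M i → InReg Sys i w
  | step {i j : Fin k} {w w' : List V} (r : PRule V) :
      InReg Sys i w → r ∈ Sys.R i → r.applies w w' → tarRegion i r.tar = some j →
      InReg Sys j w'

/-- The language generated by `Sys`: all terminal strings sent out of the skin
membrane at any time during a computation. -/
def PLang {V : Type} {k : ℕ} (Sys : PSys V k) : Set (List V) :=
  {w | (∀ a ∈ w, a ∈ Sys.T) ∧
    ∃ (i : Fin k) (w' : List V) (r : PRule V),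
      InReg Sys i w' ∧ i.val = 0 ∧ r ∈ Sys.R i ∧ r.tar = Tar.out ∧ r.applies w' w}

/-- A production of a grammar in Penttonen normal form:
`AB → AC`, `A → BC`, `A → α` (`α ∈ T ∪ N`), or `A → ε`. -/
inductive PForm (T N : Type) where
  | cs (A B C : N)
  | split (A B C : N)
  | unit (A : N) (a : T ⊕ N)
  | eps (A : N)

/-- The alphabet of `Π₁`: grammar symbols, markers `P_i^j` (`j ∈ {1,2,3}`,
encoded as `Fin 3`), and the end marker `X`. -/
abbrev Vt (T N : Type) : Type := (T ⊕ N) ⊕ ((ℕ × Fin 3) ⊕ Unit)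

/-- A grammar symbol as a symbol of `Π₁`. -/
def sym (T N : Type) (a : T ⊕ N) : Vt T N := Sum.inl a

/-- A nonterminal as a symbol of `Π₁`. -/
def nt (T N : Type) (A : N) : Vt T N := Sum.inl (Sum.inr A)

/-- The marker `P_i^j` (here `j : Fin 3` encodes the superscript `j+1`). -/
def mrk (T N : Type) (i : ℕ) (j : Fin 3) : Vt T N := Sum.inr (Sum.inl (i, j))

/-- The end marker `X`. -/
def Xsym (T N : Type) : Vt T N := Sum.inr (Sum.inr ())

/-- Rules of the skin membrane of `Π₁`. -/
def R1set (T N : Type) (rs : List (PForm T N)) : Set (PRule (Vt T N)) :=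
  {r | (∃ k A B C, rs[k]? = some (PForm.cs A B C) ∧
          r = iRule [nt T N A] [mrk T N k 0] [] Tar.inn) ∨
       (∃ k A B C, rs[k]? = some (PForm.split A B C) ∧
          r = iRule [nt T N A] [mrk T N k 0] [] Tar.inn) ∨
       (∃ k A a, rs[k]? = some (PForm.unit A a) ∧
          r = iRule [nt T N A] [mrk T N k 0] [] Tar.inn) ∨
       (∃ k A, rs[(k : ℕ)]? = some (PForm.eps A) ∧
          r = dRule [] [nt T N A] [] Tar.here) ∨
       r = dRule [] [Xsym T N] [] Tar.out}

/-- Rules of membrane 2 of `Π₁`. -/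
def R2set (T N : Type) (rs : List (PForm T N)) : Set (PRule (Vt T N)) :=
  {r | (∃ k A B C, rs[k]? = some (PForm.cs A B C) ∧
          (r = iRule [mrk T N k 0] [mrk T N k 1] [] Tar.inn ∨
           r = dRule [] [mrk T N k 0, mrk T N k 2] [] Tar.out)) ∨
       (∃ k A B C, rs[k]? = some (PForm.split A B C) ∧
          (r = iRule [mrk T N k 0] [mrk T N k 1] [] Tar.inn ∨
           r = dRule [] [mrk T N k 1] [] Tar.out)) ∨
       (∃ k A a, rs[k]? = some (PForm.unit A a) ∧
          (r = iRule [mrk T N k 0] [sym T N a] [] Tar.inn ∨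
           r = dRule [] [mrk T N k 1, mrk T N k 2] [] Tar.out))}

/-- Rules of membrane 3 of `Π₁`. -/
def R3set (T N : Type) (rs : List (PForm T N)) : Set (PRule (Vt T N)) :=
  {r | (∃ k A B C, rs[k]? = some (PForm.cs A B C) ∧
          (r = dRule [] [mrk T N k 1, nt T N B] [] Tar.inn ∨
           r = iRule [mrk T N k 2] [nt T N C] [] Tar.out)) ∨
       (∃ k A B C, rs[k]? = some (PForm.split A B C) ∧
          (r = iRule [mrk T N k 0] [nt T N B] [] Tar.inn ∨
           r = dRule [] [mrk T N k 2] [] Tar.out)) ∨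
       (∃ k A a, rs[k]? = some (PForm.unit A a) ∧
          (r = iRule [mrk T N k 0] [mrk T N k 1] [] Tar.inn ∨
           r = iRule [mrk T N k 1] [mrk T N k 2] [] Tar.out))}

/-- Rules of membrane 4 of `Π₁`. -/
def R4set (T N : Type) (rs : List (PForm T N)) : Set (PRule (Vt T N)) :=
  {r | (∃ k A B C, rs[k]? = some (PForm.cs A B C) ∧
          r = iRule [mrk T N k 0] [mrk T N k 2] [] Tar.out) ∨
       (∃ k A B C, rs[k]? = some (PForm.split A B C) ∧
          (r = dRule [] [nt T N A, mrk T N k 0] [] Tar.inn ∨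
           r = iRule [mrk T N k 2] [nt T N C] [] Tar.out)) ∨
       (∃ k A a, rs[k]? = some (PForm.unit A a) ∧
          r = dRule [] [nt T N A, mrk T N k 0] [] Tar.out)}

/-- Rules of membrane 5 of `Π₁`. -/
def R5set (T N : Type) (rs : List (PForm T N)) : Set (PRule (Vt T N)) :=
  {r | ∃ k A B C, rs[k]? = some (PForm.split A B C) ∧
          r = iRule [mrk T N k 1] [mrk T N k 2] [] Tar.out}

/-- The P system `Π₁` of Theorem 1, simulating the Penttonen normal form
grammar with start symbol `S` and (ordered) productions `rs`; the axiom is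
`SX` in the skin membrane. -/
def Pi1 (T N : Type) (S : N) (rs : List (PForm T N)) : PSys (Vt T N) 5 where
  T := {a | ∃ t : T, a = Sum.inl (Sum.inl t)}
  M := fun i => if i = 0 then {[nt T N S, Xsym T N]} else ∅
  R := fun i =>
    if i.val = 0 then R1set T N rs
    else if i.val = 1 then R2set T N rs
    else if i.val = 2 then R3set T N rs
    else if i.val = 3 then R4set T N rs
    else R5set T N rs

section Helpers

variable {T N : Type}

/-- `a` is a marker symbol. -/
def Mrk : Vt T N → Prop := fun a => match a with
  | Sum.inr (Sum.inl _) => True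
  | _ => False

@[simp] lemma Mrk_mrk (k : ℕ) (j : Fin 3) : Mrk (mrk T N k j) := trivial
@[simp] lemma not_Mrk_inl (a : T ⊕ N) : ¬ Mrk (Sum.inl a : Vt T N) := fun h => h
@[simp] lemma not_Mrk_nt (A : N) : ¬ Mrk (nt T N A) := fun h => h
@[simp] lemma not_Mrk_sym (a : T ⊕ N) : ¬ Mrk (sym T N a) := fun h => h
@[simp] lemma not_Mrk_X : ¬ Mrk (Xsym T N) := fun h => h

/-- marker-free string -/
def MF (w : List (Vt T N)) : Prop := ∀ a ∈ w, ¬ Mrk a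

@[simp] lemma MF_nil : MF ([] : List (Vt T N)) := by intro a h; cases h
@[simp] lemma MF_cons {a : Vt T N} {w : List (Vt T N)} :
    MF (a :: w) ↔ ¬ Mrk a ∧ MF w := by
  constructor
  · intro h; exact ⟨h a (List.mem_cons_self), fun b hb => h b (List.mem_cons_of_mem _ hb)⟩
  · rintro ⟨h1, h2⟩ b hb; rcases List.mem_cons.1 hb with rfl | hb
    · exact h1
    · exact h2 b hb

@[simp] lemma MF_append {x y : List (Vt T N)} : MF (x ++ y) ↔ MF x ∧ MF y := by
  constructor
  · intro h; exact ⟨fun a ha => h a (List.mem_append_left _ ha),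
      fun a ha => h a (List.mem_append_right _ ha)⟩
  · rintro ⟨h1, h2⟩ a ha; rcases List.mem_append.1 ha with ha | ha
    · exact h1 a ha
    · exact h2 a ha

lemma MF.not_mem {w : List (Vt T N)} (h : MF w) {k : ℕ} {j : Fin 3} :
    mrk T N k j ∉ w := fun hm => h _ hm (Mrk_mrk k j)

/-- shape: a single distinguished symbol surrounded by marker-free strings -/
def Sh1 (c : Vt T N) (w : List (Vt T N)) : Prop :=
  ∃ x z, w = x ++ c :: z ∧ MF x ∧ MF z

/-- shape: two distinguished symbols, everything between them satisfies `Y`,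
marker-free outside -/
def Sh2 (c₀ c₁ : Vt T N) (Y : Vt T N → Prop) (w : List (Vt T N)) : Prop :=
  ∃ x y z, w = x ++ c₀ :: (y ++ c₁ :: z) ∧ MF x ∧ MF z ∧ ∀ a ∈ y, Y a

lemma unique_split {α : Type _} {c : α} :
    ∀ {x x₁ z x₂ : List α}, x ++ c :: z = x₁ ++ c :: x₂ → c ∉ x → c ∉ z →
      x₁ = x ∧ x₂ = z := by
  intro x
  induction x with
  | nil =>
    intro x₁ z x₂ h hx hz
    cases x₁ with
    | nil => exact ⟨rfl, by simpa using h.symm⟩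
    | cons b x₁' =>
      simp only [List.nil_append, List.cons_append, List.cons.injEq] at h
      exfalso; exact hz (h.2 ▸ List.mem_append_right _ (List.mem_cons_self))
  | cons a x' ih =>
    intro x₁ z x₂ h hx hz
    cases x₁ with
    | nil =>
      simp only [List.cons_append, List.nil_append, List.cons.injEq] at h
      exact absurd (h.1 ▸ (List.mem_cons_self (a := a) (l := x'))) (by simpa [h.1] using hx)
    | cons b x₁' =>
      simp only [List.cons_append, List.cons.injEq] at h
      have hx' : c ∉ x' := fun hc => hx (List.mem_cons_of_mem _ hc)
      obtain ⟨h1, h2⟩ := ih h.2 hx' hz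
      exact ⟨by rw [h.1, h1], h2⟩

lemma pair_split {α : Type _} {a b : α} :
    ∀ {u v x₁ x₂ : List α}, u ++ v = x₁ ++ a :: b :: x₂ →
      (∃ s t, u = s ++ a :: b :: t) ∨ (∃ s, u = s ++ [a] ∧ ∃ t, v = b :: t) ∨
      (∃ s t, v = s ++ a :: b :: t) := by
  intro u
  induction u with
  | nil =>
    intro v x₁ x₂ h
    right; right; exact ⟨x₁, x₂, by simpa using h⟩
  | cons c u' ih =>
    intro v x₁ x₂ h
    cases x₁ with
    | nil =>
      simp only [List.cons_append, List.nil_append, List.cons.injEq] at h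
      obtain ⟨rfl, h2⟩ := h
      cases u' with
      | nil =>
        right; left; exact ⟨[], rfl, x₂, by simpa using h2⟩
      | cons d u'' =>
        simp only [List.cons_append, List.cons.injEq] at h2
        obtain ⟨rfl, _⟩ := h2
        left; exact ⟨[], u'', rfl⟩
    | cons e x₁' =>
      simp only [List.cons_append, List.cons.injEq] at h
      obtain ⟨rfl, h2⟩ := h
      rcases ih h2 with ⟨s, t, hst⟩ | ⟨s, hs, t, ht⟩ | hv
      · left; exact ⟨c :: s, t, by simp [hst]⟩
      · right; left; exact ⟨c :: s, by simp [hs], t, ht⟩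
      · right; right; exact hv

/-- applicability of a one-symbol-context insertion rule -/
lemma ins_applies {c s : Vt T N} {t : Tar} {w w' : List (Vt T N)}
    (h : (iRule [c] [s] [] t).applies w w') :
    ∃ x₁ x₂, w = x₁ ++ c :: x₂ ∧ w' = x₁ ++ c :: s :: x₂ := by
  simpa [iRule, PRule.applies] using h

lemma del1_applies {s : Vt T N} {t : Tar} {w w' : List (Vt T N)}
    (h : (dRule [] [s] [] t).applies w w') :
    ∃ x₁ x₂, w = x₁ ++ s :: x₂ ∧ w' = x₁ ++ x₂ := by
  simpa [dRule, PRule.applies] using h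

lemma del2_applies {s₁ s₂ : Vt T N} {t : Tar} {w w' : List (Vt T N)}
    (h : (dRule [] [s₁, s₂] [] t).applies w w') :
    ∃ x₁ x₂, w = x₁ ++ s₁ :: s₂ :: x₂ ∧ w' = x₁ ++ x₂ := by
  simpa [dRule, PRule.applies] using h

end Helpers

section Shapes

variable {T N : Type}

lemma Sh1_mem {c : Vt T N} {w : List (Vt T N)} (h : Sh1 c w) {m : Vt T N}
    (hm : Mrk m) (hmem : m ∈ w) : m = c := by
  obtain ⟨x, z, rfl, hx, hz⟩ := h
  rcases List.mem_append.1 hmem with h' | h'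
  · exact absurd hm (hx _ h')
  · rcases List.mem_cons.1 h' with h' | h'
    · exact h'
    · exact absurd hm (hz _ h')

lemma Sh2_mem {c₀ c₁ : Vt T N} {Y : Vt T N → Prop} {w : List (Vt T N)}
    (h : Sh2 c₀ c₁ Y w) {m : Vt T N} (hm : Mrk m) (hmem : m ∈ w) :
    m = c₀ ∨ m = c₁ ∨ Y m := by
  obtain ⟨x, y, z, rfl, hx, hz, hY⟩ := h
  rcases List.mem_append.1 hmem with h' | h'
  · exact absurd hm (hx _ h')
  rcases List.mem_cons.1 h' with h' | h'
  · exact Or.inl h'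
  rcases List.mem_append.1 h' with h' | h'
  · exact Or.inr (Or.inr (hY _ h'))
  rcases List.mem_cons.1 h' with h' | h'
  · exact Or.inr (Or.inl h')
  · exact absurd hm (hz _ h')

/-- insertion after the unique symbol of `Sh1`, non-marker inserted symbol -/
lemma Sh1_ins_nm {c s : Vt T N} {t : Tar} {w w' : List (Vt T N)}
    (h : Sh1 c w) (hc : Mrk c) (hs : ¬ Mrk s)
    (ha : (iRule [c] [s] [] t).applies w w') : Sh1 c w' := by
  obtain ⟨x, z, rfl, hx, hz⟩ := h
  obtain ⟨x₁, x₂, hw, rfl⟩ := ins_applies ha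
  obtain ⟨rfl, rfl⟩ := unique_split hw (fun hm => hx _ hm hc) (fun hm => hz _ hm hc)
  exact ⟨x₁, s :: x₂, rfl, hx, by simp [hs, hz]⟩

/-- insertion after the unique symbol of `Sh1`, marker inserted -/
lemma Sh1_ins_mrk {c s : Vt T N} {t : Tar} {w w' : List (Vt T N)}
    (h : Sh1 c w) (hc : Mrk c)
    (ha : (iRule [c] [s] [] t).applies w w') : Sh2 c s (fun _ => False) w' := by
  obtain ⟨x, z, rfl, hx, hz⟩ := h
  obtain ⟨x₁, x₂, hw, rfl⟩ := ins_applies ha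
  obtain ⟨rfl, rfl⟩ := unique_split hw (fun hm => hx _ hm hc) (fun hm => hz _ hm hc)
  exact ⟨x₁, [], x₂, by simp, hx, hz, by simp⟩

/-- insertion after `c₀` in `Sh2`, inserted symbol goes into the middle block -/
lemma Sh2_ins_c₀ {c₀ c₁ s : Vt T N} {Y Y' : Vt T N → Prop} {t : Tar}
    {w w' : List (Vt T N)} (h : Sh2 c₀ c₁ Y w) (hc : Mrk c₀) (hY0 : ¬ Y c₀)
    (h01 : c₀ ≠ c₁) (hs : Y' s) (hYY' : ∀ a, Y a → Y' a)
    (ha : (iRule [c₀] [s] [] t).applies w w') : Sh2 c₀ c₁ Y' w' := by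
  obtain ⟨x, y, z, rfl, hx, hz, hY⟩ := h
  obtain ⟨x₁, x₂, hw, rfl⟩ := ins_applies ha
  have h1 : c₀ ∉ x := fun hm => hx _ hm hc
  have h2 : c₀ ∉ y ++ c₁ :: z := by
    intro hm
    rcases List.mem_append.1 hm with hm | hm
    · exact hY0 (hY _ hm)
    rcases List.mem_cons.1 hm with hm | hm
    · exact h01 hm
    · exact hz _ hm hc
  obtain ⟨rfl, rfl⟩ := unique_split hw h1 h2
  exact ⟨x₁, s :: y, z, by simp, hx, hz, by
    intro a hma
    rcases List.mem_cons.1 hma with rfl | hma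
    · exact hs
    · exact hYY' _ (hY _ hma)⟩

/-- insertion after `c₁` in `Sh2`, non-marker inserted symbol -/
lemma Sh2_ins_c₁ {c₀ c₁ s : Vt T N} {Y : Vt T N → Prop} {t : Tar}
    {w w' : List (Vt T N)} (h : Sh2 c₀ c₁ Y w) (hc : Mrk c₁) (hY1 : ¬ Y c₁)
    (h10 : c₁ ≠ c₀) (hs : ¬ Mrk s)
    (ha : (iRule [c₁] [s] [] t).applies w w') : Sh2 c₀ c₁ Y w' := by
  obtain ⟨x, y, z, hw0, hx, hz, hY⟩ := h
  obtain ⟨x₁, x₂, hw, rfl⟩ := ins_applies ha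
  have hw0' : (x ++ c₀ :: y) ++ c₁ :: z = x₁ ++ c₁ :: x₂ := by
    rw [← hw, hw0]; simp
  have h1 : c₁ ∉ x ++ c₀ :: y := by
    intro hm
    rcases List.mem_append.1 hm with hm | hm
    · exact hx _ hm hc
    rcases List.mem_cons.1 hm with hm | hm
    · exact h10 hm
    · exact hY1 (hY _ hm)
  obtain ⟨rfl, rfl⟩ := unique_split hw0' h1 (fun hm => hz _ hm hc)
  exact ⟨x, y, s :: x₂, by simp, hx, by simp [hs, hz], hY⟩

/-- deletion of the unique symbol of `Sh1` -/
lemma Sh1_del1 {c : Vt T N} {t : Tar} {w w' : List (Vt T N)}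
    (h : Sh1 c w) (hc : Mrk c)
    (ha : (dRule [] [c] [] t).applies w w') : MF w' := by
  obtain ⟨x, z, rfl, hx, hz⟩ := h
  obtain ⟨x₁, x₂, hw, rfl⟩ := del1_applies ha
  obtain ⟨rfl, rfl⟩ := unique_split hw (fun hm => hx _ hm hc) (fun hm => hz _ hm hc)
  simp [hx, hz]

/-- deletion of `c₁` from `Sh2` -/
lemma Sh2_del1_c₁ {c₀ c₁ : Vt T N} {Y : Vt T N → Prop} {t : Tar}
    {w w' : List (Vt T N)} (h : Sh2 c₀ c₁ Y w) (hc : Mrk c₁) (hY1 : ¬ Y c₁)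
    (h10 : c₁ ≠ c₀) (hYnm : ∀ a, Y a → ¬ Mrk a)
    (ha : (dRule [] [c₁] [] t).applies w w') : Sh1 c₀ w' := by
  obtain ⟨x, y, z, hw0, hx, hz, hY⟩ := h
  obtain ⟨x₁, x₂, hw, rfl⟩ := del1_applies ha
  have hw0' : (x ++ c₀ :: y) ++ c₁ :: z = x₁ ++ c₁ :: x₂ := by
    rw [← hw, hw0]; simp
  have h1 : c₁ ∉ x ++ c₀ :: y := by
    intro hm
    rcases List.mem_append.1 hm with hm | hm
    · exact hx _ hm hc
    rcases List.mem_cons.1 hm with hm | hm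
    · exact h10 hm
    · exact hY1 (hY _ hm)
  obtain ⟨rfl, rfl⟩ := unique_split hw0' h1 (fun hm => hz _ hm hc)
  exact ⟨x, y ++ x₂, by simp, hx, by
    rw [MF_append]
    exact ⟨fun a hma => hYnm a (hY a hma), hz⟩⟩

/-- deletion of the pair `c₀ c₁` from `Sh2`: succeeds only with empty middle,
result marker-free -/
lemma Sh2_del2_both {c₀ c₁ : Vt T N} {Y : Vt T N → Prop} {t : Tar}
    {w w' : List (Vt T N)} (h : Sh2 c₀ c₁ Y w) (hc : Mrk c₀) (hY0 : ¬ Y c₀)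
    (h01 : c₀ ≠ c₁) (hY1 : ¬ Y c₁)
    (ha : (dRule [] [c₀, c₁] [] t).applies w w') : MF w' := by
  obtain ⟨x, y, z, rfl, hx, hz, hY⟩ := h
  obtain ⟨x₁, x₂, hw, rfl⟩ := del2_applies ha
  have hw' : x ++ c₀ :: (y ++ c₁ :: z) = x₁ ++ c₀ :: (c₁ :: x₂) := by simpa using hw
  have h2 : c₀ ∉ y ++ c₁ :: z := by
    intro hm
    rcases List.mem_append.1 hm with hm | hm
    · exact hY0 (hY _ hm)
    rcases List.mem_cons.1 hm with hm | hm
    · exact h01 hm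
    · exact hz _ hm hc
  obtain ⟨rfl, h3⟩ := unique_split hw' (fun hm => hx _ hm hc) h2
  cases y with
  | nil =>
    simp only [List.nil_append, List.cons.injEq] at h3
    rw [h3.2]; simp [hx, hz]
  | cons a y' =>
    simp only [List.cons_append, List.cons.injEq] at h3
    exact absurd (h3.1 ▸ hY a (List.mem_cons_self)) hY1

/-- deletion of `[d, c₀]` from `Sh2` (the `AP₀`-type deletion) -/
lemma Sh2_del2_before_c₀ {c₀ c₁ d : Vt T N} {Y : Vt T N → Prop} {t : Tar}
    {w w' : List (Vt T N)} (h : Sh2 c₀ c₁ Y w) (hc : Mrk c₀) (hY0 : ¬ Y c₀)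
    (h01 : c₀ ≠ c₁) (hYnm : ∀ a, Y a → ¬ Mrk a)
    (ha : (dRule [] [d, c₀] [] t).applies w w') : Sh1 c₁ w' := by
  obtain ⟨x, y, z, hw0, hx, hz, hY⟩ := h
  obtain ⟨x₁, x₂, hw, rfl⟩ := del2_applies ha
  have hw' : x ++ c₀ :: (y ++ c₁ :: z) = (x₁ ++ [d]) ++ c₀ :: x₂ := by
    rw [← hw0, hw]; simp
  have h2 : c₀ ∉ y ++ c₁ :: z := by
    intro hm
    rcases List.mem_append.1 hm with hm | hm
    · exact hY0 (hY _ hm)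
    rcases List.mem_cons.1 hm with hm | hm
    · exact h01 hm
    · exact hz _ hm hc
  obtain ⟨h3, h4⟩ := unique_split hw' (fun hm => hx _ hm hc) h2
  subst h4
  have hx₁ : MF x₁ := by
    rw [← h3] at hx
    exact (MF_append.1 hx).1
  exact ⟨x₁ ++ y, z, by simp, MF_append.2 ⟨hx₁, fun a hma => hYnm a (hY a hma)⟩, hz⟩

/-- deletion of `[c₁, d]` from `Sh2` with empty middle -/
lemma Sh2_del2_after_c₁ {c₀ c₁ d : Vt T N} {t : Tar}
    {w w' : List (Vt T N)} (h : Sh2 c₀ c₁ (fun _ => False) w) (hc : Mrk c₁)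
    (h10 : c₁ ≠ c₀)
    (ha : (dRule [] [c₁, d] [] t).applies w w') : Sh1 c₀ w' := by
  obtain ⟨x, y, z, hw0, hx, hz, hY⟩ := h
  have hy : y = [] := by
    cases y with
    | nil => rfl
    | cons a y' => exact absurd (hY a (List.mem_cons_self)) (fun h => h)
  subst hy
  obtain ⟨x₁, x₂, hw, rfl⟩ := del2_applies ha
  have hw' : (x ++ [c₀]) ++ c₁ :: z = x₁ ++ c₁ :: (d :: x₂) := by
    rw [← hw, hw0]; simp
  have h1 : c₁ ∉ x ++ [c₀] := by
    intro hm
    rcases List.mem_append.1 hm with hm | hm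
    · exact hx _ hm hc
    · exact h10 (List.mem_singleton.1 hm)
  obtain ⟨rfl, h3⟩ := unique_split hw' h1 (fun hm => hz _ hm hc)
  have hz' : MF x₂ := by
    have : d :: x₂ = z := h3.symm ▸ rfl
    rw [← this] at hz
    exact (MF_cons.1 hz).2
  exact ⟨x, x₂, by simp, hx, hz'⟩

/-- successor of a `Y`-symbol occurrence: pair decomposition forces the second
symbol to be `c₁` or a `Y`-symbol -/
lemma Sh2_succ {c₀ c₁ p q : Vt T N} {Y : Vt T N → Prop}
    {w x₁ x₂ : List (Vt T N)} (h : Sh2 c₀ c₁ Y w) (hp : Mrk p)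
    (hp0 : p ≠ c₀) (hp1 : p ≠ c₁)
    (hdec : w = x₁ ++ p :: q :: x₂) : q = c₁ ∨ Y q := by
  obtain ⟨x, y, z, rfl, hx, hz, hY⟩ := h
  have h0 : x ++ c₀ :: (y ++ c₁ :: z) = x₁ ++ p :: q :: x₂ := hdec
  rcases pair_split h0 with ⟨s, t, hst⟩ | ⟨s, hs, t, ht⟩ | ⟨s, t, hst⟩
  · exact absurd hp (hx _ (hst ▸ List.mem_append_right _
      (List.mem_cons_self)) )
  · exact absurd hp (hx _ (hs ▸ List.mem_append_right _ (List.mem_singleton.2 rfl)))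
  · -- pair inside c₀ :: (y ++ c₁ :: z)
    cases s with
    | nil =>
      simp only [List.nil_append, List.cons.injEq] at hst
      exact absurd hst.1.symm hp0
    | cons e s' =>
      simp only [List.cons_append, List.cons.injEq] at hst
      rcases pair_split hst.2 with ⟨s₂, t₂, h₂⟩ | ⟨s₂, hs₂, t₂, ht₂⟩ | ⟨s₂, t₂, h₂⟩
      · exact Or.inr (hY _ (h₂ ▸ List.mem_append_right _
          (List.mem_cons_of_mem _ (List.mem_cons_self))))
      · injection ht₂ with hq _
        exact Or.inl hq.symm
      · cases s₂ with
        | nil =>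
          simp only [List.nil_append, List.cons.injEq] at h₂
          exact absurd h₂.1.symm hp1
        | cons f s₂' =>
          simp only [List.cons_append, List.cons.injEq] at h₂
          exact absurd hp (hz _ (h₂.2 ▸ List.mem_append_right _
            (List.mem_cons_self)))

end Shapes

section Invariant

variable {T N : Type}

lemma mrk_inj {k k' : ℕ} {j j' : Fin 3} (h : mrk T N k j = mrk T N k' j') :
    k = k' ∧ j = j' := by
  simpa [mrk, Prod.ext_iff] using h

lemma Sh2_mono {c₀ c₁ : Vt T N} {Y Y' : Vt T N → Prop} {w : List (Vt T N)}
    (h : Sh2 c₀ c₁ Y w) (hYY' : ∀ a, Y a → Y' a) : Sh2 c₀ c₁ Y' w := by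
  obtain ⟨x, y, z, hw, hx, hz, hY⟩ := h
  exact ⟨x, y, z, hw, hx, hz, fun a ha => hYY' a (hY a ha)⟩

/-- The structural invariant of `Π₁`. -/
def PInv (rs : List (PForm T N)) (i : Fin 5) (w : List (Vt T N)) : Prop :=
  MF w ∨
  ∃ k,
    (∃ A B C, rs[k]? = some (PForm.cs A B C) ∧
      ((i = 1 ∧ (Sh1 (mrk T N k 0) w ∨
                 Sh2 (mrk T N k 0) (mrk T N k 2) (fun a => a = mrk T N k 1) w)) ∨
       (i = 2 ∧ (Sh2 (mrk T N k 0) (mrk T N k 1) (fun _ => False) w ∨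
                 Sh2 (mrk T N k 0) (mrk T N k 2) (fun a => a = mrk T N k 1) w)) ∨
       (i = 3 ∧ Sh1 (mrk T N k 0) w))) ∨
    (∃ A B C, rs[k]? = some (PForm.split A B C) ∧
      ((i = 1 ∧ (Sh1 (mrk T N k 0) w ∨ Sh1 (mrk T N k 1) w)) ∨
       (i = 2 ∧ (Sh2 (mrk T N k 0) (mrk T N k 1) (fun _ => False) w ∨
                 Sh2 (mrk T N k 1) (mrk T N k 2) (fun _ => False) w)) ∨
       (i = 3 ∧ (Sh2 (mrk T N k 0) (mrk T N k 1) (fun a => ¬ Mrk a) w ∨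
                 Sh2 (mrk T N k 1) (mrk T N k 2) (fun _ => False) w)) ∨
       (i = 4 ∧ Sh1 (mrk T N k 1) w))) ∨
    (∃ A a, rs[k]? = some (PForm.unit A a) ∧
      ((i = 1 ∧ (Sh1 (mrk T N k 0) w ∨
                 Sh2 (mrk T N k 1) (mrk T N k 2) (fun _ => False) w)) ∨
       (i = 2 ∧ (Sh1 (mrk T N k 0) w ∨ Sh1 (mrk T N k 1) w)) ∨
       (i = 3 ∧ Sh2 (mrk T N k 0) (mrk T N k 1) (fun _ => False) w)))

lemma Inv_zero {rs : List (PForm T N)} {w : List (Vt T N)}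
    (h : PInv rs 0 w) : MF w := by
  rcases h with h | ⟨k, ⟨A, B, C, hk, h⟩ | ⟨A, B, C, hk, h⟩ | ⟨A, a, hk, h⟩⟩
  · exact h
  all_goals rcases h with ⟨h0, -⟩ | ⟨h0, -⟩ | ⟨h0, -⟩ | ⟨h0, -⟩ <;>
    exact absurd h0 (by decide)

lemma Inv_one {rs : List (PForm T N)} {w : List (Vt T N)}
    (h : PInv rs 1 w) : MF w ∨
    ∃ k, (∃ A B C, rs[k]? = some (PForm.cs A B C) ∧
            (Sh1 (mrk T N k 0) w ∨
             Sh2 (mrk T N k 0) (mrk T N k 2) (fun a => a = mrk T N k 1) w)) ∨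
         (∃ A B C, rs[k]? = some (PForm.split A B C) ∧
            (Sh1 (mrk T N k 0) w ∨ Sh1 (mrk T N k 1) w)) ∨
         (∃ A a, rs[k]? = some (PForm.unit A a) ∧
            (Sh1 (mrk T N k 0) w ∨
             Sh2 (mrk T N k 1) (mrk T N k 2) (fun _ => False) w)) := by
  rcases h with h | ⟨k, ⟨A, B, C, hk, h⟩ | ⟨A, B, C, hk, h⟩ | ⟨A, a, hk, h⟩⟩
  · exact Or.inl h
  · rcases h with ⟨-, h⟩ | ⟨h0, -⟩ | ⟨h0, -⟩
    · exact Or.inr ⟨k, Or.inl ⟨A, B, C, hk, h⟩⟩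
    all_goals exact absurd h0 (by decide)
  · rcases h with ⟨-, h⟩ | ⟨h0, -⟩ | ⟨h0, -⟩ | ⟨h0, -⟩
    · exact Or.inr ⟨k, Or.inr (Or.inl ⟨A, B, C, hk, h⟩)⟩
    all_goals exact absurd h0 (by decide)
  · rcases h with ⟨-, h⟩ | ⟨h0, -⟩ | ⟨h0, -⟩
    · exact Or.inr ⟨k, Or.inr (Or.inr ⟨A, a, hk, h⟩)⟩
    all_goals exact absurd h0 (by decide)

lemma Inv_two {rs : List (PForm T N)} {w : List (Vt T N)}
    (h : PInv rs 2 w) : MF w ∨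
    ∃ k, (∃ A B C, rs[k]? = some (PForm.cs A B C) ∧
            (Sh2 (mrk T N k 0) (mrk T N k 1) (fun _ => False) w ∨
             Sh2 (mrk T N k 0) (mrk T N k 2) (fun a => a = mrk T N k 1) w)) ∨
         (∃ A B C, rs[k]? = some (PForm.split A B C) ∧
            (Sh2 (mrk T N k 0) (mrk T N k 1) (fun _ => False) w ∨
             Sh2 (mrk T N k 1) (mrk T N k 2) (fun _ => False) w)) ∨
         (∃ A a, rs[k]? = some (PForm.unit A a) ∧
            (Sh1 (mrk T N k 0) w ∨ Sh1 (mrk T N k 1) w)) := by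
  rcases h with h | ⟨k, ⟨A, B, C, hk, h⟩ | ⟨A, B, C, hk, h⟩ | ⟨A, a, hk, h⟩⟩
  · exact Or.inl h
  · rcases h with ⟨h0, -⟩ | ⟨-, h⟩ | ⟨h0, -⟩
    · exact absurd h0 (by decide)
    · exact Or.inr ⟨k, Or.inl ⟨A, B, C, hk, h⟩⟩
    · exact absurd h0 (by decide)
  · rcases h with ⟨h0, -⟩ | ⟨-, h⟩ | ⟨h0, -⟩ | ⟨h0, -⟩
    · exact absurd h0 (by decide)
    · exact Or.inr ⟨k, Or.inr (Or.inl ⟨A, B, C, hk, h⟩)⟩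
    · exact absurd h0 (by decide)
    · exact absurd h0 (by decide)
  · rcases h with ⟨h0, -⟩ | ⟨-, h⟩ | ⟨h0, -⟩
    · exact absurd h0 (by decide)
    · exact Or.inr ⟨k, Or.inr (Or.inr ⟨A, a, hk, h⟩)⟩
    · exact absurd h0 (by decide)

lemma Inv_three {rs : List (PForm T N)} {w : List (Vt T N)}
    (h : PInv rs 3 w) : MF w ∨
    ∃ k, (∃ A B C, rs[k]? = some (PForm.cs A B C) ∧ Sh1 (mrk T N k 0) w) ∨
         (∃ A B C, rs[k]? = some (PForm.split A B C) ∧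
            (Sh2 (mrk T N k 0) (mrk T N k 1) (fun a => ¬ Mrk a) w ∨
             Sh2 (mrk T N k 1) (mrk T N k 2) (fun _ => False) w)) ∨
         (∃ A a, rs[k]? = some (PForm.unit A a) ∧
            Sh2 (mrk T N k 0) (mrk T N k 1) (fun _ => False) w) := by
  rcases h with h | ⟨k, ⟨A, B, C, hk, h⟩ | ⟨A, B, C, hk, h⟩ | ⟨A, a, hk, h⟩⟩
  · exact Or.inl h
  · rcases h with ⟨h0, -⟩ | ⟨h0, -⟩ | ⟨-, h⟩
    · exact absurd h0 (by decide)
    · exact absurd h0 (by decide)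
    · exact Or.inr ⟨k, Or.inl ⟨A, B, C, hk, h⟩⟩
  · rcases h with ⟨h0, -⟩ | ⟨h0, -⟩ | ⟨-, h⟩ | ⟨h0, -⟩
    · exact absurd h0 (by decide)
    · exact absurd h0 (by decide)
    · exact Or.inr ⟨k, Or.inr (Or.inl ⟨A, B, C, hk, h⟩)⟩
    · exact absurd h0 (by decide)
  · rcases h with ⟨h0, -⟩ | ⟨h0, -⟩ | ⟨-, h⟩
    · exact absurd h0 (by decide)
    · exact absurd h0 (by decide)
    · exact Or.inr ⟨k, Or.inr (Or.inr ⟨A, a, hk, h⟩)⟩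

lemma Inv_four {rs : List (PForm T N)} {w : List (Vt T N)}
    (h : PInv rs 4 w) : MF w ∨
    ∃ k A B C, rs[k]? = some (PForm.split A B C) ∧ Sh1 (mrk T N k 1) w := by
  rcases h with h | ⟨k, ⟨A, B, C, hk, h⟩ | ⟨A, B, C, hk, h⟩ | ⟨A, a, hk, h⟩⟩
  · exact Or.inl h
  · rcases h with ⟨h0, -⟩ | ⟨h0, -⟩ | ⟨h0, -⟩
    all_goals exact absurd h0 (by decide)
  · rcases h with ⟨h0, -⟩ | ⟨h0, -⟩ | ⟨h0, -⟩ | ⟨-, h⟩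
    · exact absurd h0 (by decide)
    · exact absurd h0 (by decide)
    · exact absurd h0 (by decide)
    · exact Or.inr ⟨k, A, B, C, hk, h⟩
  · rcases h with ⟨h0, -⟩ | ⟨h0, -⟩ | ⟨h0, -⟩
    all_goals exact absurd h0 (by decide)

end Invariant

section Steps

variable {T N : Type}

lemma step_r0 {rs : List (PForm T N)} {r : PRule (Vt T N)} {w w' : List (Vt T N)}
    {j : Fin 5} (hr : r ∈ R1set T N rs) (happ : r.applies w w')
    (htar : tarRegion (0 : Fin 5) r.tar = some j) (hMF : MF w) :
    PInv rs j w' := by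
  simp only [R1set, Set.mem_setOf_eq] at hr
  rcases hr with ⟨k, A, B, C, hk, rfl⟩ | ⟨k, A, B, C, hk, rfl⟩ |
    ⟨k, A, a, hk, rfl⟩ | ⟨k, A, hk, rfl⟩ | rfl
  · -- cs marker insertion, to membrane 2
    obtain rfl : (1 : Fin 5) = j := Option.some_inj.mp htar
    obtain ⟨x₁, x₂, hw1, rfl⟩ := ins_applies happ
    rw [hw1] at hMF
    simp only [MF_append, MF_cons] at hMF
    exact Or.inr ⟨k, Or.inl ⟨A, B, C, hk, Or.inl ⟨rfl, Or.inl
      ⟨x₁ ++ [nt T N A], x₂, by simp, by simp [hMF.1], hMF.2.2⟩⟩⟩⟩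
  · -- split marker insertion
    obtain rfl : (1 : Fin 5) = j := Option.some_inj.mp htar
    obtain ⟨x₁, x₂, hw1, rfl⟩ := ins_applies happ
    rw [hw1] at hMF
    simp only [MF_append, MF_cons] at hMF
    exact Or.inr ⟨k, Or.inr (Or.inl ⟨A, B, C, hk, Or.inl ⟨rfl, Or.inl
      ⟨x₁ ++ [nt T N A], x₂, by simp, by simp [hMF.1], hMF.2.2⟩⟩⟩)⟩
  · -- unit marker insertion
    obtain rfl : (1 : Fin 5) = j := Option.some_inj.mp htar
    obtain ⟨x₁, x₂, hw1, rfl⟩ := ins_applies happ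
    rw [hw1] at hMF
    simp only [MF_append, MF_cons] at hMF
    exact Or.inr ⟨k, Or.inr (Or.inr ⟨A, a, hk, Or.inl ⟨rfl, Or.inl
      ⟨x₁ ++ [nt T N A], x₂, by simp, by simp [hMF.1], hMF.2.2⟩⟩⟩)⟩
  · -- ε-rule: delete a nonterminal, stays in skin
    obtain rfl : (0 : Fin 5) = j := Option.some_inj.mp htar
    obtain ⟨x₁, x₂, hw1, rfl⟩ := del1_applies happ
    rw [hw1] at hMF
    simp only [MF_append, MF_cons] at hMF
    exact Or.inl (MF_append.2 ⟨hMF.1, hMF.2.2⟩)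
  · -- delete X, sent out of the system: impossible target
    simp [dRule, tarRegion] at htar

lemma step_r4 {rs : List (PForm T N)} {r : PRule (Vt T N)} {w w' : List (Vt T N)}
    {j : Fin 5} (hr : r ∈ R5set T N rs) (happ : r.applies w w')
    (htar : tarRegion (4 : Fin 5) r.tar = some j) (ih : PInv rs 4 w) :
    PInv rs j w' := by
  simp only [R5set, Set.mem_setOf_eq] at hr
  obtain ⟨k, A, B, C, hk, rfl⟩ := hr
  obtain rfl : (3 : Fin 5) = j := Option.some_inj.mp htar
  obtain ⟨x₁, x₂, hw1, -⟩ := ins_applies happ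
  have hmem : mrk T N k 1 ∈ w := by rw [hw1]; simp
  rcases Inv_four ih with hMF | ⟨k', A', B', C', hk', hsh⟩
  · exact absurd (Mrk_mrk k 1) (hMF _ hmem)
  · obtain ⟨rfl, -⟩ := mrk_inj (Sh1_mem hsh (Mrk_mrk _ _) hmem)
    exact Or.inr ⟨k, Or.inr (Or.inl ⟨A, B, C, hk, Or.inr (Or.inr (Or.inl
      ⟨rfl, Or.inr (Sh1_ins_mrk hsh (Mrk_mrk _ _) happ)⟩))⟩)⟩

end Steps

section Step1

variable {T N : Type}

lemma step_r1 {rs : List (PForm T N)} {r : PRule (Vt T N)} {w w' : List (Vt T N)}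
    {j : Fin 5} (hr : r ∈ R2set T N rs) (happ : r.applies w w')
    (htar : tarRegion (1 : Fin 5) r.tar = some j) (ih : PInv rs 1 w) :
    PInv rs j w' := by
  simp only [R2set, Set.mem_setOf_eq] at hr
  rcases hr with ⟨k, A, B, C, hk, rfl | rfl⟩ | ⟨k, A, B, C, hk, rfl | rfl⟩ |
    ⟨k, A, a, hk, rfl | rfl⟩
  · -- cs : insert P1 after P0, to membrane 3
    obtain rfl : (2 : Fin 5) = j := Option.some_inj.mp htar
    obtain ⟨x₁, x₂, hw1, -⟩ := ins_applies happ
    have hmem : mrk T N k 0 ∈ w := by rw [hw1]; simp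
    rcases Inv_one ih with hMF | ⟨k', ⟨A', B', C', hk', hsh | hsh⟩ |
      ⟨A', B', C', hk', hsh | hsh⟩ | ⟨A', a', hk', hsh | hsh⟩⟩
    · exact absurd (Mrk_mrk k 0) (hMF _ hmem)
    · obtain ⟨h_eq, -⟩ := mrk_inj (Sh1_mem hsh (Mrk_mrk _ _) hmem); subst h_eq
      exact Or.inr ⟨k, Or.inl ⟨A', B', C', hk', Or.inr (Or.inl ⟨rfl,
        Or.inl (Sh1_ins_mrk hsh (Mrk_mrk _ _) happ)⟩)⟩⟩
    · rcases Sh2_mem hsh (Mrk_mrk _ _) hmem with he | he | he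
      · obtain ⟨h_eq, -⟩ := mrk_inj he; subst h_eq
        exact Or.inr ⟨k, Or.inl ⟨A', B', C', hk', Or.inr (Or.inl ⟨rfl,
          Or.inr (Sh2_ins_c₀ hsh (Mrk_mrk _ _) (by simp [mrk, Fin.ext_iff])
            (by simp [mrk, Fin.ext_iff]) rfl (fun _ ha => ha) happ)⟩)⟩⟩
      · exact absurd (mrk_inj he).2 (by decide)
      · exact absurd (mrk_inj he).2 (by decide)
    · obtain ⟨h_eq, -⟩ := mrk_inj (Sh1_mem hsh (Mrk_mrk _ _) hmem); subst h_eq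
      rw [hk] at hk'; simp at hk'
    · exact absurd (mrk_inj (Sh1_mem hsh (Mrk_mrk _ _) hmem)).2 (by decide)
    · obtain ⟨h_eq, -⟩ := mrk_inj (Sh1_mem hsh (Mrk_mrk _ _) hmem); subst h_eq
      rw [hk] at hk'; simp at hk'
    · rcases Sh2_mem hsh (Mrk_mrk _ _) hmem with he | he | he
      · exact absurd (mrk_inj he).2 (by decide)
      · exact absurd (mrk_inj he).2 (by decide)
      · exact he.elim
  · -- cs : delete P0 P2, out to skin
    obtain rfl : (0 : Fin 5) = j := Option.some_inj.mp htar
    obtain ⟨x₁, x₂, hw1, -⟩ := del2_applies happ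
    have hmem : mrk T N k 0 ∈ w := by rw [hw1]; simp
    have hmem2 : mrk T N k 2 ∈ w := by rw [hw1]; simp
    rcases Inv_one ih with hMF | ⟨k', ⟨A', B', C', hk', hsh | hsh⟩ |
      ⟨A', B', C', hk', hsh | hsh⟩ | ⟨A', a', hk', hsh | hsh⟩⟩
    · exact absurd (Mrk_mrk k 0) (hMF _ hmem)
    · exact absurd (mrk_inj (Sh1_mem hsh (Mrk_mrk _ _) hmem2)).2 (by decide)
    · rcases Sh2_mem hsh (Mrk_mrk _ _) hmem with he | he | he
      · obtain ⟨h_eq, -⟩ := mrk_inj he; subst h_eq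
        exact Or.inl (Sh2_del2_both hsh (Mrk_mrk _ _) (by simp [mrk, Fin.ext_iff])
          (by simp [mrk, Fin.ext_iff]) (by simp [mrk, Fin.ext_iff]) happ)
      · exact absurd (mrk_inj he).2 (by decide)
      · exact absurd (mrk_inj he).2 (by decide)
    · obtain ⟨h_eq, -⟩ := mrk_inj (Sh1_mem hsh (Mrk_mrk _ _) hmem); subst h_eq
      rw [hk] at hk'; simp at hk'
    · exact absurd (mrk_inj (Sh1_mem hsh (Mrk_mrk _ _) hmem)).2 (by decide)
    · obtain ⟨h_eq, -⟩ := mrk_inj (Sh1_mem hsh (Mrk_mrk _ _) hmem); subst h_eq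
      rw [hk] at hk'; simp at hk'
    · rcases Sh2_mem hsh (Mrk_mrk _ _) hmem with he | he | he
      · exact absurd (mrk_inj he).2 (by decide)
      · exact absurd (mrk_inj he).2 (by decide)
      · exact he.elim
  · -- split : insert P1 after P0, to membrane 3
    obtain rfl : (2 : Fin 5) = j := Option.some_inj.mp htar
    obtain ⟨x₁, x₂, hw1, -⟩ := ins_applies happ
    have hmem : mrk T N k 0 ∈ w := by rw [hw1]; simp
    rcases Inv_one ih with hMF | ⟨k', ⟨A', B', C', hk', hsh | hsh⟩ |
      ⟨A', B', C', hk', hsh | hsh⟩ | ⟨A', a', hk', hsh | hsh⟩⟩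
    · exact absurd (Mrk_mrk k 0) (hMF _ hmem)
    · obtain ⟨h_eq, -⟩ := mrk_inj (Sh1_mem hsh (Mrk_mrk _ _) hmem); subst h_eq
      rw [hk] at hk'; simp at hk'
    · rcases Sh2_mem hsh (Mrk_mrk _ _) hmem with he | he | he
      · obtain ⟨h_eq, -⟩ := mrk_inj he; subst h_eq
        rw [hk] at hk'; simp at hk'
      · exact absurd (mrk_inj he).2 (by decide)
      · exact absurd (mrk_inj he).2 (by decide)
    · obtain ⟨h_eq, -⟩ := mrk_inj (Sh1_mem hsh (Mrk_mrk _ _) hmem); subst h_eq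
      exact Or.inr ⟨k, Or.inr (Or.inl ⟨A', B', C', hk', Or.inr (Or.inl ⟨rfl,
        Or.inl (Sh1_ins_mrk hsh (Mrk_mrk _ _) happ)⟩)⟩)⟩
    · exact absurd (mrk_inj (Sh1_mem hsh (Mrk_mrk _ _) hmem)).2 (by decide)
    · obtain ⟨h_eq, -⟩ := mrk_inj (Sh1_mem hsh (Mrk_mrk _ _) hmem); subst h_eq
      rw [hk] at hk'; simp at hk'
    · rcases Sh2_mem hsh (Mrk_mrk _ _) hmem with he | he | he
      · exact absurd (mrk_inj he).2 (by decide)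
      · exact absurd (mrk_inj he).2 (by decide)
      · exact he.elim
  · -- split : delete P1, out to skin
    obtain rfl : (0 : Fin 5) = j := Option.some_inj.mp htar
    obtain ⟨x₁, x₂, hw1, -⟩ := del1_applies happ
    have hmem : mrk T N k 1 ∈ w := by rw [hw1]; simp
    rcases Inv_one ih with hMF | ⟨k', ⟨A', B', C', hk', hsh | hsh⟩ |
      ⟨A', B', C', hk', hsh | hsh⟩ | ⟨A', a', hk', hsh | hsh⟩⟩
    · exact absurd (Mrk_mrk k 1) (hMF _ hmem)
    · exact absurd (mrk_inj (Sh1_mem hsh (Mrk_mrk _ _) hmem)).2 (by decide)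
    · rcases Sh2_mem hsh (Mrk_mrk _ _) hmem with he | he | he
      · exact absurd (mrk_inj he).2 (by decide)
      · exact absurd (mrk_inj he).2 (by decide)
      · obtain ⟨h_eq, -⟩ := mrk_inj he; subst h_eq
        rw [hk] at hk'; simp at hk'
    · exact absurd (mrk_inj (Sh1_mem hsh (Mrk_mrk _ _) hmem)).2 (by decide)
    · obtain ⟨h_eq, -⟩ := mrk_inj (Sh1_mem hsh (Mrk_mrk _ _) hmem); subst h_eq
      exact Or.inl (Sh1_del1 hsh (Mrk_mrk _ _) happ)
    · exact absurd (mrk_inj (Sh1_mem hsh (Mrk_mrk _ _) hmem)).2 (by decide)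
    · rcases Sh2_mem hsh (Mrk_mrk _ _) hmem with he | he | he
      · obtain ⟨h_eq, -⟩ := mrk_inj he; subst h_eq
        rw [hk] at hk'; simp at hk'
      · exact absurd (mrk_inj he).2 (by decide)
      · exact he.elim
  · -- unit : insert a after P0, to membrane 3
    obtain rfl : (2 : Fin 5) = j := Option.some_inj.mp htar
    obtain ⟨x₁, x₂, hw1, -⟩ := ins_applies happ
    have hmem : mrk T N k 0 ∈ w := by rw [hw1]; simp
    rcases Inv_one ih with hMF | ⟨k', ⟨A', B', C', hk', hsh | hsh⟩ |
      ⟨A', B', C', hk', hsh | hsh⟩ | ⟨A', a', hk', hsh | hsh⟩⟩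
    · exact absurd (Mrk_mrk k 0) (hMF _ hmem)
    · obtain ⟨h_eq, -⟩ := mrk_inj (Sh1_mem hsh (Mrk_mrk _ _) hmem); subst h_eq
      rw [hk] at hk'; simp at hk'
    · rcases Sh2_mem hsh (Mrk_mrk _ _) hmem with he | he | he
      · obtain ⟨h_eq, -⟩ := mrk_inj he; subst h_eq
        rw [hk] at hk'; simp at hk'
      · exact absurd (mrk_inj he).2 (by decide)
      · exact absurd (mrk_inj he).2 (by decide)
    · obtain ⟨h_eq, -⟩ := mrk_inj (Sh1_mem hsh (Mrk_mrk _ _) hmem); subst h_eq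
      rw [hk] at hk'; simp at hk'
    · exact absurd (mrk_inj (Sh1_mem hsh (Mrk_mrk _ _) hmem)).2 (by decide)
    · obtain ⟨h_eq, -⟩ := mrk_inj (Sh1_mem hsh (Mrk_mrk _ _) hmem); subst h_eq
      exact Or.inr ⟨k, Or.inr (Or.inr ⟨A', a', hk', Or.inr (Or.inl ⟨rfl,
        Or.inl (Sh1_ins_nm hsh (Mrk_mrk _ _) (by simp) happ)⟩)⟩)⟩
    · rcases Sh2_mem hsh (Mrk_mrk _ _) hmem with he | he | he
      · exact absurd (mrk_inj he).2 (by decide)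
      · exact absurd (mrk_inj he).2 (by decide)
      · exact he.elim
  · -- unit : delete P1 P2, out to skin
    obtain rfl : (0 : Fin 5) = j := Option.some_inj.mp htar
    obtain ⟨x₁, x₂, hw1, -⟩ := del2_applies happ
    have hmem : mrk T N k 1 ∈ w := by rw [hw1]; simp
    rcases Inv_one ih with hMF | ⟨k', ⟨A', B', C', hk', hsh | hsh⟩ |
      ⟨A', B', C', hk', hsh | hsh⟩ | ⟨A', a', hk', hsh | hsh⟩⟩
    · exact absurd (Mrk_mrk k 1) (hMF _ hmem)
    · exact absurd (mrk_inj (Sh1_mem hsh (Mrk_mrk _ _) hmem)).2 (by decide)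
    · rcases Sh2_mem hsh (Mrk_mrk _ _) hmem with he | he | he
      · exact absurd (mrk_inj he).2 (by decide)
      · exact absurd (mrk_inj he).2 (by decide)
      · obtain ⟨h_eq, -⟩ := mrk_inj he; subst h_eq
        rw [hk] at hk'; simp at hk'
    · exact absurd (mrk_inj (Sh1_mem hsh (Mrk_mrk _ _) hmem)).2 (by decide)
    · obtain ⟨h_eq, -⟩ := mrk_inj (Sh1_mem hsh (Mrk_mrk _ _) hmem); subst h_eq
      rw [hk] at hk'; simp at hk'
    · exact absurd (mrk_inj (Sh1_mem hsh (Mrk_mrk _ _) hmem)).2 (by decide)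
    · rcases Sh2_mem hsh (Mrk_mrk _ _) hmem with he | he | he
      · obtain ⟨h_eq, -⟩ := mrk_inj he; subst h_eq
        exact Or.inl (Sh2_del2_both hsh (Mrk_mrk _ _) not_false
          (by simp [mrk, Fin.ext_iff]) not_false happ)
      · exact absurd (mrk_inj he).2 (by decide)
      · exact he.elim

end Step1

section Step23

variable {T N : Type}

lemma step_r2 {rs : List (PForm T N)} {r : PRule (Vt T N)} {w w' : List (Vt T N)}
    {j : Fin 5} (hr : r ∈ R3set T N rs) (happ : r.applies w w')
    (htar : tarRegion (2 : Fin 5) r.tar = some j) (ih : PInv rs 2 w) :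
    PInv rs j w' := by
  simp only [R3set, Set.mem_setOf_eq] at hr
  rcases hr with ⟨k, A, B, C, hk, rfl | rfl⟩ | ⟨k, A, B, C, hk, rfl | rfl⟩ |
    ⟨k, A, a, hk, rfl | rfl⟩
  · -- cs : delete P1 B, to membrane 4
    obtain rfl : (3 : Fin 5) = j := Option.some_inj.mp htar
    obtain ⟨x₁, x₂, hw1, -⟩ := del2_applies happ
    have hmem : mrk T N k 1 ∈ w := by rw [hw1]; simp
    rcases Inv_two ih with hMF | ⟨k', ⟨A', B', C', hk', hsh | hsh⟩ |
      ⟨A', B', C', hk', hsh | hsh⟩ | ⟨A', a', hk', hsh | hsh⟩⟩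
    · exact absurd (Mrk_mrk k 1) (hMF _ hmem)
    · rcases Sh2_mem hsh (Mrk_mrk _ _) hmem with he | he | he
      · exact absurd (mrk_inj he).2 (by decide)
      · obtain ⟨h_eq, -⟩ := mrk_inj he; subst h_eq
        exact Or.inr ⟨k, Or.inl ⟨A', B', C', hk', Or.inr (Or.inr ⟨rfl,
          Sh2_del2_after_c₁ hsh (Mrk_mrk _ _) (by simp [mrk, Fin.ext_iff]) happ⟩)⟩⟩
      · exact he.elim
    · rcases Sh2_mem hsh (Mrk_mrk _ _) hmem with he | he | he
      · exact absurd (mrk_inj he).2 (by decide)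
      · exact absurd (mrk_inj he).2 (by decide)
      · obtain ⟨h_eq, -⟩ := mrk_inj he; subst h_eq
        rcases Sh2_succ hsh (Mrk_mrk k 1) (by simp [mrk, Fin.ext_iff])
          (by simp [mrk, Fin.ext_iff]) hw1 with hq | hq
        · simp [mrk, nt] at hq
        · simp [mrk, nt] at hq
    · rcases Sh2_mem hsh (Mrk_mrk _ _) hmem with he | he | he
      · exact absurd (mrk_inj he).2 (by decide)
      · obtain ⟨h_eq, -⟩ := mrk_inj he; subst h_eq
        rw [hk] at hk'; simp at hk'
      · exact he.elim
    · rcases Sh2_mem hsh (Mrk_mrk _ _) hmem with he | he | he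
      · obtain ⟨h_eq, -⟩ := mrk_inj he; subst h_eq
        rw [hk] at hk'; simp at hk'
      · exact absurd (mrk_inj he).2 (by decide)
      · exact he.elim
    · exact absurd (mrk_inj (Sh1_mem hsh (Mrk_mrk _ _) hmem)).2 (by decide)
    · obtain ⟨h_eq, -⟩ := mrk_inj (Sh1_mem hsh (Mrk_mrk _ _) hmem); subst h_eq
      rw [hk] at hk'; simp at hk'
  · -- cs : insert C after P2, out to membrane 2
    obtain rfl : (1 : Fin 5) = j := Option.some_inj.mp htar
    obtain ⟨x₁, x₂, hw1, -⟩ := ins_applies happ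
    have hmem : mrk T N k 2 ∈ w := by rw [hw1]; simp
    rcases Inv_two ih with hMF | ⟨k', ⟨A', B', C', hk', hsh | hsh⟩ |
      ⟨A', B', C', hk', hsh | hsh⟩ | ⟨A', a', hk', hsh | hsh⟩⟩
    · exact absurd (Mrk_mrk k 2) (hMF _ hmem)
    · rcases Sh2_mem hsh (Mrk_mrk _ _) hmem with he | he | he
      · exact absurd (mrk_inj he).2 (by decide)
      · exact absurd (mrk_inj he).2 (by decide)
      · exact he.elim
    · rcases Sh2_mem hsh (Mrk_mrk _ _) hmem with he | he | he
      · exact absurd (mrk_inj he).2 (by decide)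
      · obtain ⟨h_eq, -⟩ := mrk_inj he; subst h_eq
        exact Or.inr ⟨k, Or.inl ⟨A', B', C', hk', Or.inl ⟨rfl,
          Or.inr (Sh2_ins_c₁ hsh (Mrk_mrk _ _) (by simp [mrk, Fin.ext_iff])
            (by simp [mrk, Fin.ext_iff]) (by simp) happ)⟩⟩⟩
      · exact absurd (mrk_inj he).2 (by decide)
    · rcases Sh2_mem hsh (Mrk_mrk _ _) hmem with he | he | he
      · exact absurd (mrk_inj he).2 (by decide)
      · exact absurd (mrk_inj he).2 (by decide)
      · exact he.elim
    · rcases Sh2_mem hsh (Mrk_mrk _ _) hmem with he | he | he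
      · exact absurd (mrk_inj he).2 (by decide)
      · obtain ⟨h_eq, -⟩ := mrk_inj he; subst h_eq
        rw [hk] at hk'; simp at hk'
      · exact he.elim
    · exact absurd (mrk_inj (Sh1_mem hsh (Mrk_mrk _ _) hmem)).2 (by decide)
    · exact absurd (mrk_inj (Sh1_mem hsh (Mrk_mrk _ _) hmem)).2 (by decide)
  · -- split : insert B after P0, to membrane 4
    obtain rfl : (3 : Fin 5) = j := Option.some_inj.mp htar
    obtain ⟨x₁, x₂, hw1, -⟩ := ins_applies happ
    have hmem : mrk T N k 0 ∈ w := by rw [hw1]; simp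
    rcases Inv_two ih with hMF | ⟨k', ⟨A', B', C', hk', hsh | hsh⟩ |
      ⟨A', B', C', hk', hsh | hsh⟩ | ⟨A', a', hk', hsh | hsh⟩⟩
    · exact absurd (Mrk_mrk k 0) (hMF _ hmem)
    · rcases Sh2_mem hsh (Mrk_mrk _ _) hmem with he | he | he
      · obtain ⟨h_eq, -⟩ := mrk_inj he; subst h_eq
        rw [hk] at hk'; simp at hk'
      · exact absurd (mrk_inj he).2 (by decide)
      · exact he.elim
    · rcases Sh2_mem hsh (Mrk_mrk _ _) hmem with he | he | he
      · obtain ⟨h_eq, -⟩ := mrk_inj he; subst h_eq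
        rw [hk] at hk'; simp at hk'
      · exact absurd (mrk_inj he).2 (by decide)
      · exact absurd (mrk_inj he).2 (by decide)
    · rcases Sh2_mem hsh (Mrk_mrk _ _) hmem with he | he | he
      · obtain ⟨h_eq, -⟩ := mrk_inj he; subst h_eq
        exact Or.inr ⟨k, Or.inr (Or.inl ⟨A', B', C', hk', Or.inr (Or.inr (Or.inl
          ⟨rfl, Or.inl (Sh2_ins_c₀ hsh (Mrk_mrk _ _) not_false
            (by simp [mrk, Fin.ext_iff]) (by simp) (fun _ h => h.elim) happ)⟩))⟩)⟩
      · exact absurd (mrk_inj he).2 (by decide)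
      · exact he.elim
    · rcases Sh2_mem hsh (Mrk_mrk _ _) hmem with he | he | he
      · exact absurd (mrk_inj he).2 (by decide)
      · exact absurd (mrk_inj he).2 (by decide)
      · exact he.elim
    · obtain ⟨h_eq, -⟩ := mrk_inj (Sh1_mem hsh (Mrk_mrk _ _) hmem); subst h_eq
      rw [hk] at hk'; simp at hk'
    · exact absurd (mrk_inj (Sh1_mem hsh (Mrk_mrk _ _) hmem)).2 (by decide)
  · -- split : delete P2, out to membrane 2
    obtain rfl : (1 : Fin 5) = j := Option.some_inj.mp htar
    obtain ⟨x₁, x₂, hw1, -⟩ := del1_applies happ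
    have hmem : mrk T N k 2 ∈ w := by rw [hw1]; simp
    rcases Inv_two ih with hMF | ⟨k', ⟨A', B', C', hk', hsh | hsh⟩ |
      ⟨A', B', C', hk', hsh | hsh⟩ | ⟨A', a', hk', hsh | hsh⟩⟩
    · exact absurd (Mrk_mrk k 2) (hMF _ hmem)
    · rcases Sh2_mem hsh (Mrk_mrk _ _) hmem with he | he | he
      · exact absurd (mrk_inj he).2 (by decide)
      · exact absurd (mrk_inj he).2 (by decide)
      · exact he.elim
    · rcases Sh2_mem hsh (Mrk_mrk _ _) hmem with he | he | he
      · exact absurd (mrk_inj he).2 (by decide)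
      · obtain ⟨h_eq, -⟩ := mrk_inj he; subst h_eq
        rw [hk] at hk'; simp at hk'
      · exact absurd (mrk_inj he).2 (by decide)
    · rcases Sh2_mem hsh (Mrk_mrk _ _) hmem with he | he | he
      · exact absurd (mrk_inj he).2 (by decide)
      · exact absurd (mrk_inj he).2 (by decide)
      · exact he.elim
    · rcases Sh2_mem hsh (Mrk_mrk _ _) hmem with he | he | he
      · exact absurd (mrk_inj he).2 (by decide)
      · obtain ⟨h_eq, -⟩ := mrk_inj he; subst h_eq
        exact Or.inr ⟨k, Or.inr (Or.inl ⟨A', B', C', hk', Or.inl ⟨rfl,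
          Or.inr (Sh2_del1_c₁ hsh (Mrk_mrk _ _) not_false
            (by simp [mrk, Fin.ext_iff]) (fun _ h => h.elim) happ)⟩⟩)⟩
      · exact he.elim
    · exact absurd (mrk_inj (Sh1_mem hsh (Mrk_mrk _ _) hmem)).2 (by decide)
    · exact absurd (mrk_inj (Sh1_mem hsh (Mrk_mrk _ _) hmem)).2 (by decide)
  · -- unit : insert P1 after P0, to membrane 4
    obtain rfl : (3 : Fin 5) = j := Option.some_inj.mp htar
    obtain ⟨x₁, x₂, hw1, -⟩ := ins_applies happ
    have hmem : mrk T N k 0 ∈ w := by rw [hw1]; simp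
    rcases Inv_two ih with hMF | ⟨k', ⟨A', B', C', hk', hsh | hsh⟩ |
      ⟨A', B', C', hk', hsh | hsh⟩ | ⟨A', a', hk', hsh | hsh⟩⟩
    · exact absurd (Mrk_mrk k 0) (hMF _ hmem)
    · rcases Sh2_mem hsh (Mrk_mrk _ _) hmem with he | he | he
      · obtain ⟨h_eq, -⟩ := mrk_inj he; subst h_eq
        rw [hk] at hk'; simp at hk'
      · exact absurd (mrk_inj he).2 (by decide)
      · exact he.elim
    · rcases Sh2_mem hsh (Mrk_mrk _ _) hmem with he | he | he
      · obtain ⟨h_eq, -⟩ := mrk_inj he; subst h_eq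
        rw [hk] at hk'; simp at hk'
      · exact absurd (mrk_inj he).2 (by decide)
      · exact absurd (mrk_inj he).2 (by decide)
    · rcases Sh2_mem hsh (Mrk_mrk _ _) hmem with he | he | he
      · obtain ⟨h_eq, -⟩ := mrk_inj he; subst h_eq
        rw [hk] at hk'; simp at hk'
      · exact absurd (mrk_inj he).2 (by decide)
      · exact he.elim
    · rcases Sh2_mem hsh (Mrk_mrk _ _) hmem with he | he | he
      · exact absurd (mrk_inj he).2 (by decide)
      · exact absurd (mrk_inj he).2 (by decide)
      · exact he.elim
    · obtain ⟨h_eq, -⟩ := mrk_inj (Sh1_mem hsh (Mrk_mrk _ _) hmem); subst h_eq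
      exact Or.inr ⟨k, Or.inr (Or.inr ⟨A', a', hk', Or.inr (Or.inr
        ⟨rfl, Sh1_ins_mrk hsh (Mrk_mrk _ _) happ⟩)⟩)⟩
    · exact absurd (mrk_inj (Sh1_mem hsh (Mrk_mrk _ _) hmem)).2 (by decide)
  · -- unit : insert P2 after P1, out to membrane 2
    obtain rfl : (1 : Fin 5) = j := Option.some_inj.mp htar
    obtain ⟨x₁, x₂, hw1, -⟩ := ins_applies happ
    have hmem : mrk T N k 1 ∈ w := by rw [hw1]; simp
    rcases Inv_two ih with hMF | ⟨k', ⟨A', B', C', hk', hsh | hsh⟩ |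
      ⟨A', B', C', hk', hsh | hsh⟩ | ⟨A', a', hk', hsh | hsh⟩⟩
    · exact absurd (Mrk_mrk k 1) (hMF _ hmem)
    · rcases Sh2_mem hsh (Mrk_mrk _ _) hmem with he | he | he
      · exact absurd (mrk_inj he).2 (by decide)
      · obtain ⟨h_eq, -⟩ := mrk_inj he; subst h_eq
        rw [hk] at hk'; simp at hk'
      · exact he.elim
    · rcases Sh2_mem hsh (Mrk_mrk _ _) hmem with he | he | he
      · exact absurd (mrk_inj he).2 (by decide)
      · exact absurd (mrk_inj he).2 (by decide)
      · obtain ⟨h_eq, -⟩ := mrk_inj he; subst h_eq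
        rw [hk] at hk'; simp at hk'
    · rcases Sh2_mem hsh (Mrk_mrk _ _) hmem with he | he | he
      · exact absurd (mrk_inj he).2 (by decide)
      · obtain ⟨h_eq, -⟩ := mrk_inj he; subst h_eq
        rw [hk] at hk'; simp at hk'
      · exact he.elim
    · rcases Sh2_mem hsh (Mrk_mrk _ _) hmem with he | he | he
      · obtain ⟨h_eq, -⟩ := mrk_inj he; subst h_eq
        rw [hk] at hk'; simp at hk'
      · exact absurd (mrk_inj he).2 (by decide)
      · exact he.elim
    · exact absurd (mrk_inj (Sh1_mem hsh (Mrk_mrk _ _) hmem)).2 (by decide)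
    · obtain ⟨h_eq, -⟩ := mrk_inj (Sh1_mem hsh (Mrk_mrk _ _) hmem); subst h_eq
      exact Or.inr ⟨k, Or.inr (Or.inr ⟨A', a', hk', Or.inl ⟨rfl,
        Or.inr (Sh1_ins_mrk hsh (Mrk_mrk _ _) happ)⟩⟩)⟩

lemma step_r3 {rs : List (PForm T N)} {r : PRule (Vt T N)} {w w' : List (Vt T N)}
    {j : Fin 5} (hr : r ∈ R4set T N rs) (happ : r.applies w w')
    (htar : tarRegion (3 : Fin 5) r.tar = some j) (ih : PInv rs 3 w) :
    PInv rs j w' := by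
  simp only [R4set, Set.mem_setOf_eq] at hr
  rcases hr with ⟨k, A, B, C, hk, rfl⟩ | ⟨k, A, B, C, hk, rfl | rfl⟩ |
    ⟨k, A, a, hk, rfl⟩
  · -- cs : insert P2 after P0, out to membrane 3
    obtain rfl : (2 : Fin 5) = j := Option.some_inj.mp htar
    obtain ⟨x₁, x₂, hw1, -⟩ := ins_applies happ
    have hmem : mrk T N k 0 ∈ w := by rw [hw1]; simp
    rcases Inv_three ih with hMF | ⟨k', ⟨A', B', C', hk', hsh⟩ |
      ⟨A', B', C', hk', hsh | hsh⟩ | ⟨A', a', hk', hsh⟩⟩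
    · exact absurd (Mrk_mrk k 0) (hMF _ hmem)
    · obtain ⟨h_eq, -⟩ := mrk_inj (Sh1_mem hsh (Mrk_mrk _ _) hmem); subst h_eq
      exact Or.inr ⟨k, Or.inl ⟨A', B', C', hk', Or.inr (Or.inl ⟨rfl, Or.inr
        (Sh2_mono (Sh1_ins_mrk hsh (Mrk_mrk _ _) happ) (fun _ h => h.elim))⟩)⟩⟩
    · rcases Sh2_mem hsh (Mrk_mrk _ _) hmem with he | he | he
      · obtain ⟨h_eq, -⟩ := mrk_inj he; subst h_eq
        rw [hk] at hk'; simp at hk'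
      · exact absurd (mrk_inj he).2 (by decide)
      · exact absurd (Mrk_mrk k 0) he
    · rcases Sh2_mem hsh (Mrk_mrk _ _) hmem with he | he | he
      · exact absurd (mrk_inj he).2 (by decide)
      · exact absurd (mrk_inj he).2 (by decide)
      · exact he.elim
    · rcases Sh2_mem hsh (Mrk_mrk _ _) hmem with he | he | he
      · obtain ⟨h_eq, -⟩ := mrk_inj he; subst h_eq
        rw [hk] at hk'; simp at hk'
      · exact absurd (mrk_inj he).2 (by decide)
      · exact he.elim
  · -- split : delete A P0, to membrane 5
    obtain rfl : (4 : Fin 5) = j := Option.some_inj.mp htar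
    obtain ⟨x₁, x₂, hw1, -⟩ := del2_applies happ
    have hmem : mrk T N k 0 ∈ w := by rw [hw1]; simp
    rcases Inv_three ih with hMF | ⟨k', ⟨A', B', C', hk', hsh⟩ |
      ⟨A', B', C', hk', hsh | hsh⟩ | ⟨A', a', hk', hsh⟩⟩
    · exact absurd (Mrk_mrk k 0) (hMF _ hmem)
    · obtain ⟨h_eq, -⟩ := mrk_inj (Sh1_mem hsh (Mrk_mrk _ _) hmem); subst h_eq
      rw [hk] at hk'; simp at hk'
    · rcases Sh2_mem hsh (Mrk_mrk _ _) hmem with he | he | he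
      · obtain ⟨h_eq, -⟩ := mrk_inj he; subst h_eq
        exact Or.inr ⟨k, Or.inr (Or.inl ⟨A', B', C', hk', Or.inr (Or.inr (Or.inr
          ⟨rfl, Sh2_del2_before_c₀ hsh (Mrk_mrk _ _) (fun hh => hh (Mrk_mrk _ _))
            (by simp [mrk, Fin.ext_iff]) (fun _ h => h) happ⟩))⟩)⟩
      · exact absurd (mrk_inj he).2 (by decide)
      · exact absurd (Mrk_mrk k 0) he
    · rcases Sh2_mem hsh (Mrk_mrk _ _) hmem with he | he | he
      · exact absurd (mrk_inj he).2 (by decide)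
      · exact absurd (mrk_inj he).2 (by decide)
      · exact he.elim
    · rcases Sh2_mem hsh (Mrk_mrk _ _) hmem with he | he | he
      · obtain ⟨h_eq, -⟩ := mrk_inj he; subst h_eq
        rw [hk] at hk'; simp at hk'
      · exact absurd (mrk_inj he).2 (by decide)
      · exact he.elim
  · -- split : insert C after P2, out to membrane 3
    obtain rfl : (2 : Fin 5) = j := Option.some_inj.mp htar
    obtain ⟨x₁, x₂, hw1, -⟩ := ins_applies happ
    have hmem : mrk T N k 2 ∈ w := by rw [hw1]; simp
    rcases Inv_three ih with hMF | ⟨k', ⟨A', B', C', hk', hsh⟩ |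
      ⟨A', B', C', hk', hsh | hsh⟩ | ⟨A', a', hk', hsh⟩⟩
    · exact absurd (Mrk_mrk k 2) (hMF _ hmem)
    · exact absurd (mrk_inj (Sh1_mem hsh (Mrk_mrk _ _) hmem)).2 (by decide)
    · rcases Sh2_mem hsh (Mrk_mrk _ _) hmem with he | he | he
      · exact absurd (mrk_inj he).2 (by decide)
      · exact absurd (mrk_inj he).2 (by decide)
      · exact absurd (Mrk_mrk k 2) he
    · rcases Sh2_mem hsh (Mrk_mrk _ _) hmem with he | he | he
      · exact absurd (mrk_inj he).2 (by decide)
      · obtain ⟨h_eq, -⟩ := mrk_inj he; subst h_eq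
        exact Or.inr ⟨k, Or.inr (Or.inl ⟨A', B', C', hk', Or.inr (Or.inl ⟨rfl,
          Or.inr (Sh2_ins_c₁ hsh (Mrk_mrk _ _) not_false
            (by simp [mrk, Fin.ext_iff]) (by simp) happ)⟩)⟩)⟩
      · exact he.elim
    · rcases Sh2_mem hsh (Mrk_mrk _ _) hmem with he | he | he
      · exact absurd (mrk_inj he).2 (by decide)
      · exact absurd (mrk_inj he).2 (by decide)
      · exact he.elim
  · -- unit : delete A P0, out to membrane 3
    obtain rfl : (2 : Fin 5) = j := Option.some_inj.mp htar
    obtain ⟨x₁, x₂, hw1, -⟩ := del2_applies happ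
    have hmem : mrk T N k 0 ∈ w := by rw [hw1]; simp
    rcases Inv_three ih with hMF | ⟨k', ⟨A', B', C', hk', hsh⟩ |
      ⟨A', B', C', hk', hsh | hsh⟩ | ⟨A', a', hk', hsh⟩⟩
    · exact absurd (Mrk_mrk k 0) (hMF _ hmem)
    · obtain ⟨h_eq, -⟩ := mrk_inj (Sh1_mem hsh (Mrk_mrk _ _) hmem); subst h_eq
      rw [hk] at hk'; simp at hk'
    · rcases Sh2_mem hsh (Mrk_mrk _ _) hmem with he | he | he
      · obtain ⟨h_eq, -⟩ := mrk_inj he; subst h_eq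
        rw [hk] at hk'; simp at hk'
      · exact absurd (mrk_inj he).2 (by decide)
      · exact absurd (Mrk_mrk k 0) he
    · rcases Sh2_mem hsh (Mrk_mrk _ _) hmem with he | he | he
      · exact absurd (mrk_inj he).2 (by decide)
      · exact absurd (mrk_inj he).2 (by decide)
      · exact he.elim
    · rcases Sh2_mem hsh (Mrk_mrk _ _) hmem with he | he | he
      · obtain ⟨h_eq, -⟩ := mrk_inj he; subst h_eq
        exact Or.inr ⟨k, Or.inr (Or.inr ⟨A', a', hk', Or.inr (Or.inl ⟨rfl,
          Or.inr (Sh2_del2_before_c₀ hsh (Mrk_mrk _ _) not_false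
            (by simp [mrk, Fin.ext_iff]) (fun _ h => h.elim) happ)⟩)⟩)⟩
      · exact absurd (mrk_inj he).2 (by decide)
      · exact he.elim

end Step23

section Main

variable {T N : Type}

lemma inReg_inv {S : N} {rs : List (PForm T N)} {i : Fin 5} {w : List (Vt T N)}
    (h : InReg (Pi1 T N S rs) i w) : PInv rs i w := by
  induction h with
  | @init i w hm =>
    by_cases hi : i = 0
    · subst hi
      simp only [Pi1, if_pos rfl, Set.mem_singleton_iff] at hm
      subst hm
      exact Or.inl (by simp)
    · simp only [Pi1, if_neg hi] at hm
      exact absurd hm (Set.notMem_empty _)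
  | @step i j w w' r hw hr happ htar ih =>
    fin_cases i
    · exact step_r0 (by simpa [Pi1] using hr) happ htar (Inv_zero ih)
    · exact step_r1 (by simpa [Pi1] using hr) happ htar ih
    · exact step_r2 (by simpa [Pi1] using hr) happ htar ih
    · exact step_r3 (by simpa [Pi1] using hr) happ htar ih
    · exact step_r4 (by simpa [Pi1] using hr) happ htar ih

end Main

/-- in the simulation of Theorem 1, every string reachable in the
skin membrane of `Π₁` contains no marker symbol `P_i^j`. -/
theorem stmt16 (T N : Type) (S : N) (rs : List (PForm T N)) (w : List (Vt T N))
    (h : InReg (Pi1 T N S rs) 0 w) :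
    ∀ i : ℕ, ∀ j : Fin 3, mrk T N i j ∉ w := by
  intro i j
  exact (Inv_zero (inReg_inv h)).not_mem
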